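/- arXiv:2208.08567 — 5 statements merged into one kernel-verified Lean document; each statement's English description precedes it below -/
import Mathlib

section
/- Let ū be an H-valued random variable with mean u, ‖u‖ ≤ L, E[‖ū − u‖²] ≤ σ²/m, and let ũ = min{λ/‖ū‖, 1}·ū with λ > L. Then the bias of the clipped estimator satisfies ‖E[ũ] − u‖ ≤ σ²λ / (m(λ−L)²). -/
open MeasureTheory

theorem clipped_bias
    {H : Type*} [NormedAddCommGroup H] [InnerProductSpace ℝ H] [CompleteSpace H]
    {Ω : Type*} [MeasurableSpace Ω] (μ : Measure Ω) [IsProbabilityMeasure μ]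
    (ubar : Ω → H) (u : H) (L σ m lam : ℝ)
    (hL : 0 ≤ L) (hσ : 0 < σ) (hm : 0 < m) (hlam : L < lam)
    (huL : ‖u‖ ≤ L)
    (hintu : Integrable ubar μ)
    (hmean : ∫ ω, ubar ω ∂μ = u)
    (hintclip : Integrable (fun ω => (min (lam / ‖ubar ω‖) 1) • ubar ω) μ)
    (hint2 : Integrable (fun ω => ‖ubar ω - u‖ ^ 2) μ)
    (hvar : ∫ ω, ‖ubar ω - u‖ ^ 2 ∂μ ≤ σ ^ 2 / m) :
    ‖(∫ ω, (min (lam / ‖ubar ω‖) 1) • ubar ω ∂μ) - u‖ ≤ σ ^ 2 * lam / (m * (lam - L) ^ 2) := by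
  have hlamL : (0:ℝ) < lam - L := by linarith
  have hlampos : (0:ℝ) < lam := by linarith
  set c : ℝ := lam / (lam - L) ^ 2 with hc
  have hcpos : 0 < c := div_pos hlampos (by positivity)
  -- pointwise bound
  have hpt : ∀ v : H, ‖(min (lam / ‖v‖) 1) • v - v‖ ≤ c * ‖v - u‖ ^ 2 := by
    intro v
    rcases le_or_gt ‖v‖ lam with hv | hv
    · rcases eq_or_ne v 0 with rfl | hv0
      · simp; positivity
      · have hvpos : 0 < ‖v‖ := norm_pos_iff.mpr hv0
        have : (1:ℝ) ≤ lam / ‖v‖ := (one_le_div hvpos).mpr hv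
        rw [min_eq_right this]
        simp
        positivity
    · have hvpos : 0 < ‖v‖ := lt_trans hlampos hv
      have hmin : min (lam / ‖v‖) 1 = lam / ‖v‖ :=
        min_eq_left (le_of_lt ((div_lt_one hvpos).mpr hv))
      rw [hmin]
      have h1 : (lam / ‖v‖) • v - v = (lam / ‖v‖ - 1) • v := by
        rw [sub_smul, one_smul]
      rw [h1, norm_smul, Real.norm_eq_abs]
      have h2 : |lam / ‖v‖ - 1| = 1 - lam / ‖v‖ := by
        rw [abs_of_nonpos] <;> [ring; ·linarith [(div_lt_one hvpos).mpr hv]]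
      rw [h2]
      have h3 : (1 - lam / ‖v‖) * ‖v‖ = ‖v‖ - lam := by
        field_simp
      rw [h3]
      set r := ‖v - u‖ with hr
      have hrge : ‖v‖ - L ≤ r := by
        have := norm_sub_norm_le v u
        calc ‖v‖ - L ≤ ‖v‖ - ‖u‖ := by linarith
          _ ≤ r := this
      have hrpos : lam - L < r := by linarith
      -- ‖v‖ - lam ≤ r - (lam - L) ≤ r ≤ c * r^2
      have h4 : ‖v‖ - lam ≤ r - (lam - L) := by linarith
      have h5 : r ≤ c * r ^ 2 := by
        have hr0 : 0 < r := lt_trans hlamL hrpos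
        rw [hc, div_mul_eq_mul_div, le_div_iff₀ (by positivity)]
        nlinarith [mul_lt_mul_of_pos_left hrpos (mul_pos hlampos hr0),
          mul_le_mul_of_nonneg_left (le_of_lt hlam) (mul_pos hr0 hlamL).le]
      linarith
  -- main chain
  have hsub : (∫ ω, (min (lam / ‖ubar ω‖) 1) • ubar ω ∂μ) - u
      = ∫ ω, ((min (lam / ‖ubar ω‖) 1) • ubar ω - ubar ω) ∂μ := by
    rw [integral_sub hintclip hintu, hmean]
  rw [hsub]
  calc ‖∫ ω, ((min (lam / ‖ubar ω‖) 1) • ubar ω - ubar ω) ∂μ‖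
      ≤ ∫ ω, ‖(min (lam / ‖ubar ω‖) 1) • ubar ω - ubar ω‖ ∂μ :=
        norm_integral_le_integral_norm _
    _ ≤ ∫ ω, c * ‖ubar ω - u‖ ^ 2 ∂μ := by
        apply integral_mono (hintclip.sub hintu).norm (hint2.const_mul c)
        intro ω
        exact hpt (ubar ω)
    _ = c * ∫ ω, ‖ubar ω - u‖ ^ 2 ∂μ := integral_const_mul c _
    _ ≤ c * (σ ^ 2 / m) := by
        exact mul_le_mul_of_nonneg_left hvar hcpos.le
    _ = σ ^ 2 * lam / (m * (lam - L) ^ 2) := by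
        rw [hc]; field_simp
end

section
/- Let ū be an H-valued random variable with mean u, ‖u‖ ≤ L, E[‖ū − u‖²] ≤ σ²/m, and let ũ = min{λ/‖ū‖, 1}·ū with λ > L. Then the mean squared error satisfies E[‖ũ − u‖²] ≤ (σ²/m)·[1 + ((λ+L)/(λ−L))²]. -/
open MeasureTheory

theorem clipped_mse
    {H : Type*} [NormedAddCommGroup H] [InnerProductSpace ℝ H] [CompleteSpace H]
    {Ω : Type*} [MeasurableSpace Ω] (μ : Measure Ω) [IsProbabilityMeasure μ]
    (ubar : Ω → H) (u : H) (L σ m lam : ℝ)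
    (hL : 0 ≤ L) (hσ : 0 < σ) (hm : 0 < m) (hlam : L < lam)
    (huL : ‖u‖ ≤ L)
    (hintu : Integrable ubar μ)
    (hmean : ∫ ω, ubar ω ∂μ = u)
    (hintmse : Integrable (fun ω => ‖(min (lam / ‖ubar ω‖) 1) • ubar ω - u‖ ^ 2) μ)
    (hint2 : Integrable (fun ω => ‖ubar ω - u‖ ^ 2) μ)
    (hvar : ∫ ω, ‖ubar ω - u‖ ^ 2 ∂μ ≤ σ ^ 2 / m) :
    ∫ ω, ‖(min (lam / ‖ubar ω‖) 1) • ubar ω - u‖ ^ 2 ∂μ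
      ≤ σ ^ 2 / m * (1 + ((lam + L) / (lam - L)) ^ 2) := by
  set c : ℝ := (lam + L) / (lam - L) with hc
  have hlL : (0:ℝ) < lam - L := by linarith
  have hlam0 : 0 < lam := lt_of_le_of_lt hL hlam
  have hcmul : c * (lam - L) = lam + L := div_mul_cancel₀ _ (ne_of_gt hlL)
  have key : ∀ ω, ‖(min (lam / ‖ubar ω‖) 1) • ubar ω - u‖ ^ 2
      ≤ (1 + c ^ 2) * ‖ubar ω - u‖ ^ 2 := by
    intro ω
    by_cases h : ‖ubar ω‖ ≤ lam
    · have heq : (min (lam / ‖ubar ω‖) 1) • ubar ω = ubar ω := by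
        rcases eq_or_ne (ubar ω) 0 with h0 | h0
        · simp [h0]
        · have hn : 0 < ‖ubar ω‖ := norm_pos_iff.mpr h0
          have : (1:ℝ) ≤ lam / ‖ubar ω‖ := (one_le_div hn).mpr h
          rw [min_eq_right this, one_smul]
      rw [heq]
      nlinarith [sq_nonneg c, sq_nonneg ‖ubar ω - u‖]
    · push_neg at h
      have hn : 0 < ‖ubar ω‖ := lt_trans hlam0 h
      have hmin : min (lam / ‖ubar ω‖) 1 = lam / ‖ubar ω‖ := by
        apply min_eq_left
        exact le_of_lt ((div_lt_one hn).mpr h)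
      rw [hmin]
      have hnorm : ‖(lam / ‖ubar ω‖) • ubar ω‖ = lam := by
        rw [norm_smul, Real.norm_eq_abs, abs_of_pos (div_pos hlam0 hn),
          div_mul_cancel₀ _ (ne_of_gt hn)]
      have h1 : ‖(lam / ‖ubar ω‖) • ubar ω - u‖ ≤ lam + L := by
        calc ‖(lam / ‖ubar ω‖) • ubar ω - u‖ ≤ ‖(lam / ‖ubar ω‖) • ubar ω‖ + ‖u‖ :=
              norm_sub_le _ _
          _ ≤ lam + L := by rw [hnorm]; linarith
      have h2 : lam - L ≤ ‖ubar ω - u‖ := by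
        have := norm_sub_norm_le (ubar ω) u
        calc lam - L ≤ ‖ubar ω‖ - ‖u‖ := by linarith
          _ ≤ ‖ubar ω - u‖ := norm_sub_norm_le _ _
      have hnn : 0 ≤ ‖(lam / ‖ubar ω‖) • ubar ω - u‖ := norm_nonneg _
      nlinarith [sq_nonneg ‖ubar ω - u‖, mul_le_mul h1 h1 hnn (by linarith : (0:ℝ) ≤ lam + L),
        mul_le_mul h2 h2 (le_of_lt hlL) (norm_nonneg _), sq_nonneg (c * ‖ubar ω - u‖)]
  have hcnn : (0:ℝ) ≤ 1 + c ^ 2 := by positivity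
  calc ∫ ω, ‖(min (lam / ‖ubar ω‖) 1) • ubar ω - u‖ ^ 2 ∂μ
      ≤ ∫ ω, (1 + c ^ 2) * ‖ubar ω - u‖ ^ 2 ∂μ :=
        integral_mono hintmse (hint2.const_mul _) key
    _ = (1 + c ^ 2) * ∫ ω, ‖ubar ω - u‖ ^ 2 ∂μ := integral_const_mul _ _
    _ ≤ (1 + c ^ 2) * (σ ^ 2 / m) := mul_le_mul_of_nonneg_left hvar hcnn
    _ = σ ^ 2 / m * (1 + c ^ 2) := mul_comm _ _
end

section
/- Let ū be an H-valued random variable with mean u, ‖u‖ ≤ L, E[‖ū − u‖²] ≤ σ²/m, and let ũ = min{λ/‖ū‖, 1}·ū with λ > L. Then the variance of the clipped estimator satisfies E[‖ũ − E[ũ]‖²] ≤ (σ²/m)·[1 + ((λ+L)/(λ−L))²]. -/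
open MeasureTheory

theorem clipped_variance
    {H : Type*} [NormedAddCommGroup H] [InnerProductSpace ℝ H] [CompleteSpace H]
    {Ω : Type*} [MeasurableSpace Ω] (μ : Measure Ω) [IsProbabilityMeasure μ]
    (ubar : Ω → H) (u : H) (L σ m lam : ℝ)
    (hL : 0 ≤ L) (hσ : 0 < σ) (hm : 0 < m) (hlam : L < lam)
    (huL : ‖u‖ ≤ L)
    (hintu : Integrable ubar μ)
    (hmean : ∫ ω, ubar ω ∂μ = u)
    (hintclip : Integrable (fun ω => (min (lam / ‖ubar ω‖) 1) • ubar ω) μ)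
    (hintvar : Integrable
      (fun ω => ‖(min (lam / ‖ubar ω‖) 1) • ubar ω
        - ∫ ω', (min (lam / ‖ubar ω'‖) 1) • ubar ω' ∂μ‖ ^ 2) μ)
    (hint2 : Integrable (fun ω => ‖ubar ω - u‖ ^ 2) μ)
    (hvar : ∫ ω, ‖ubar ω - u‖ ^ 2 ∂μ ≤ σ ^ 2 / m) :
    ∫ ω, ‖(min (lam / ‖ubar ω‖) 1) • ubar ω
        - ∫ ω', (min (lam / ‖ubar ω'‖) 1) • ubar ω' ∂μ‖ ^ 2 ∂μ
      ≤ σ ^ 2 / m * (1 + ((lam + L) / (lam - L)) ^ 2) := by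
  set g : Ω → H := fun ω => (min (lam / ‖ubar ω‖) 1) • ubar ω with hgdef
  set b : H := ∫ ω', g ω' ∂μ with hbdef
  set c : ℝ := (lam + L) / (lam - L) with hcdef
  have hlamL : (0:ℝ) < lam - L := by linarith
  have hlam0 : (0:ℝ) < lam := by linarith
  have hc0 : 0 ≤ c := div_nonneg (by linarith) hlamL.le
  -- norm bound on g
  have hgnorm : ∀ ω, ‖g ω‖ ≤ lam := by
    intro ω
    by_cases h0 : ubar ω = 0
    · simp [hgdef, h0, hlam0.le]
    · have hpos : 0 < ‖ubar ω‖ := norm_pos_iff.mpr h0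
      have hmin0 : 0 ≤ min (lam / ‖ubar ω‖) 1 :=
        le_min (div_nonneg hlam0.le hpos.le) zero_le_one
      have : ‖g ω‖ = min (lam / ‖ubar ω‖) 1 * ‖ubar ω‖ := by
        simp [hgdef, norm_smul, abs_of_nonneg hmin0]
      rw [this]
      rcases le_total (lam / ‖ubar ω‖) 1 with h | h
      · rw [min_eq_left h, div_mul_cancel₀ _ hpos.ne']
      · rw [min_eq_right h, one_mul]
        rw [le_div_iff₀ hpos, one_mul] at h
        exact h
  -- pointwise bound : ‖g ω - u‖^2 ≤ (1 + c^2) * ‖ubar ω - u‖^2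
  have hpt : ∀ ω, ‖g ω - u‖ ^ 2 ≤ (1 + c ^ 2) * ‖ubar ω - u‖ ^ 2 := by
    intro ω
    by_cases hcase : ‖ubar ω‖ ≤ lam
    · have hgω : g ω = ubar ω := by
        by_cases h0 : ubar ω = 0
        · simp [hgdef, h0]
        · have hpos : 0 < ‖ubar ω‖ := norm_pos_iff.mpr h0
          have h1 : (1:ℝ) ≤ lam / ‖ubar ω‖ := (one_le_div hpos).mpr hcase
          simp [hgdef, min_eq_right h1]
      rw [hgω]
      nlinarith [sq_nonneg c, sq_nonneg ‖ubar ω - u‖]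
    · push_neg at hcase
      have h1 : ‖g ω - u‖ ≤ lam + L :=
        (norm_sub_le _ _).trans (add_le_add (hgnorm ω) huL)
      have h2 : lam - L ≤ ‖ubar ω - u‖ := by
        have := norm_sub_norm_le (ubar ω) u
        have : ‖ubar ω‖ - ‖u‖ ≤ ‖ubar ω - u‖ := this
        linarith
      have h3 : ‖g ω - u‖ ≤ c * ‖ubar ω - u‖ := by
        have hce : c * (lam - L) = lam + L := by
          rw [hcdef]
          field_simp
        calc ‖g ω - u‖ ≤ lam + L := h1
          _ = c * (lam - L) := hce.symm
          _ ≤ c * ‖ubar ω - u‖ := by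
              exact mul_le_mul_of_nonneg_left h2 hc0
      have h4 : ‖g ω - u‖ ^ 2 ≤ (c * ‖ubar ω - u‖) ^ 2 := by
        apply pow_le_pow_left₀ (norm_nonneg _) h3
      nlinarith [sq_nonneg ‖ubar ω - u‖]
  -- integrability of ‖g - u‖^2
  have hasm : AEStronglyMeasurable (fun ω => ‖g ω - u‖) μ :=
    (hintclip.sub (integrable_const u)).aestronglyMeasurable.norm
  have hintg : Integrable (fun ω => ‖g ω - u‖ ^ 2) μ := by
    apply Integrable.mono' (integrable_const ((lam + L) ^ 2))
    · exact hasm.pow 2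
    · filter_upwards with ω
      have h1 : ‖g ω - u‖ ≤ lam + L :=
        (norm_sub_le _ _).trans (add_le_add (hgnorm ω) huL)
      have h2 : (0:ℝ) ≤ ‖g ω - u‖ := norm_nonneg _
      rw [Real.norm_eq_abs, abs_of_nonneg (by positivity)]
      exact pow_le_pow_left₀ h2 h1 2
  -- integrability of the inner-product term
  have hsubint : Integrable (fun ω => g ω - u) μ := hintclip.sub (integrable_const u)
  have hinner : Integrable (fun ω => (inner ℝ (g ω - u) (b - u) : ℝ)) μ :=
    hsubint.inner_const (b - u)
  have hinner2 : Integrable (fun ω => 2 * (inner ℝ (g ω - u) (b - u) : ℝ)) μ :=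
    hinner.const_mul 2
  have hA : Integrable (fun ω => ‖g ω - u‖ ^ 2 - 2 * (inner ℝ (g ω - u) (b - u) : ℝ)) μ :=
    hintg.sub hinner2
  -- key identity : variance = MSE - bias²
  have hexp : ∀ ω, ‖g ω - b‖ ^ 2
      = ‖g ω - u‖ ^ 2 - 2 * (inner ℝ (g ω - u) (b - u) : ℝ) + ‖b - u‖ ^ 2 := by
    intro ω
    have h : g ω - b = (g ω - u) - (b - u) := by abel
    rw [h, norm_sub_sq_real]
  have hib : ∫ ω, (inner ℝ (g ω - u) (b - u) : ℝ) ∂μ = ‖b - u‖ ^ 2 := by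
    have h1 : ∫ ω, (inner ℝ (g ω - u) (b - u) : ℝ) ∂μ
        = ∫ ω, (inner ℝ (b - u) (g ω - u) : ℝ) ∂μ := by
      congr 1; ext ω; exact real_inner_comm _ _
    have h2 : ∫ ω, (g ω - u) ∂μ = b - u := by
      rw [integral_sub hintclip (integrable_const u), integral_const]
      simp [hbdef]
    have h3 : ∫ ω, (inner ℝ (b - u) (g ω - u) : ℝ) ∂μ
        = (inner ℝ (b - u) (∫ ω, (g ω - u) ∂μ) : ℝ) := integral_inner hsubint (b - u)
    rw [h1, h3, h2, real_inner_self_eq_norm_sq]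
  have hkey : ∫ ω, ‖g ω - b‖ ^ 2 ∂μ = ∫ ω, ‖g ω - u‖ ^ 2 ∂μ - ‖b - u‖ ^ 2 := by
    calc ∫ ω, ‖g ω - b‖ ^ 2 ∂μ
        = ∫ ω, (‖g ω - u‖ ^ 2 - 2 * (inner ℝ (g ω - u) (b - u) : ℝ) + ‖b - u‖ ^ 2) ∂μ := by
          congr 1; ext ω; exact hexp ω
      _ = (∫ ω, (‖g ω - u‖ ^ 2 - 2 * (inner ℝ (g ω - u) (b - u) : ℝ)) ∂μ)
            + ∫ _ω, ‖b - u‖ ^ 2 ∂μ := by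
          rw [integral_add hA (integrable_const _)]
      _ = (∫ ω, ‖g ω - u‖ ^ 2 ∂μ) - 2 * (∫ ω, (inner ℝ (g ω - u) (b - u) : ℝ) ∂μ)
            + ‖b - u‖ ^ 2 := by
          rw [integral_sub hintg hinner2, integral_const_mul, integral_const]
          simp
      _ = ∫ ω, ‖g ω - u‖ ^ 2 ∂μ - ‖b - u‖ ^ 2 := by rw [hib]; ring
  have hstep1 : ∫ ω, ‖g ω - b‖ ^ 2 ∂μ ≤ ∫ ω, ‖g ω - u‖ ^ 2 ∂μ := by
    rw [hkey]; nlinarith [sq_nonneg ‖b - u‖]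
  have hstep2 : ∫ ω, ‖g ω - u‖ ^ 2 ∂μ ≤ (1 + c ^ 2) * ∫ ω, ‖ubar ω - u‖ ^ 2 ∂μ := by
    rw [← integral_const_mul]
    exact integral_mono hintg (hint2.const_mul _) hpt
  have hfin : (1 + c ^ 2) * ∫ ω, ‖ubar ω - u‖ ^ 2 ∂μ ≤ (1 + c ^ 2) * (σ ^ 2 / m) := by
    apply mul_le_mul_of_nonneg_left hvar
    positivity
  calc ∫ ω, ‖g ω - b‖ ^ 2 ∂μ ≤ (1 + c ^ 2) * (σ ^ 2 / m) := by
        linarith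
    _ = σ ^ 2 / m * (1 + c ^ 2) := by ring
end

section
/- Let f: H → ℝ be convex, X ⊂ H closed convex bounded, x ∈ X, γ > 0, and let u ∈ ∂f(x_k) and ũ ∈ H be arbitrary. If x_{k+1} = P_X(x_k − γ ũ) with x_k ∈ X, then 2γ(f(x_k) − f(x)) ≤ ‖x_k − x‖² − ‖x_{k+1} − x‖² + 2γ⟨x − x_k, ũ − u⟩ + γ²‖ũ‖². -/
open scoped RealInnerProductSpace

theorem one_step_subgradient_inequality
    {H : Type*} [NormedAddCommGroup H] [InnerProductSpace ℝ H] [CompleteSpace H]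
    (f : H → ℝ) (hf : ConvexOn ℝ Set.univ f)
    (X : Set H) (hXne : X.Nonempty) (hXclosed : IsClosed X) (hXconvex : Convex ℝ X)
    (hXbdd : Bornology.IsBounded X)
    (x xk xk1 : H) (hx : x ∈ X) (hxk : xk ∈ X) (γ : ℝ) (hγ : 0 < γ)
    (u utld : H)
    (hu : ∀ y, f y ≥ f xk + ⟪y - xk, u⟫)
    (hproj : xk1 ∈ X ∧ ∀ y ∈ X, ‖xk - γ • utld - xk1‖ ≤ ‖xk - γ • utld - y‖) :
    2 * γ * (f xk - f x) ≤
      ‖xk - x‖ ^ 2 - ‖xk1 - x‖ ^ 2 + 2 * γ * ⟪x - xk, utld - u⟫ + γ ^ 2 * ‖utld‖ ^ 2 := by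
  obtain ⟨hmem, hmin⟩ := hproj
  set z := xk - γ • utld with hz
  haveI : Nonempty X := ⟨⟨xk1, hmem⟩⟩
  -- the projection characterization
  have hinf : ‖z - xk1‖ = ⨅ w : X, ‖z - w‖ := by
    apply le_antisymm
    · exact le_ciInf fun w => hmin w w.2
    · exact ciInf_le (f := fun w : X => ‖z - (w:H)‖) ⟨0, by rintro r ⟨w, rfl⟩; positivity⟩ ⟨xk1, hmem⟩
  have hchar : ⟪z - xk1, x - xk1⟫ ≤ 0 :=
    (norm_eq_iInf_iff_real_inner_le_zero hXconvex hmem).mp hinf x hx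
  -- nonexpansiveness consequence
  have h1 : ‖xk1 - x‖ ^ 2 ≤ ‖z - x‖ ^ 2 := by
    have : z - x = (z - xk1) + (xk1 - x) := by abel
    rw [this, norm_add_sq_real]
    have : ⟪z - xk1, xk1 - x⟫ = -⟪z - xk1, x - xk1⟫ := by
      rw [← inner_neg_right]; congr 1; abel
    nlinarith [sq_nonneg (‖z - xk1‖), this ▸ neg_nonneg.mpr hchar]
  -- expand ‖z - x‖²
  have h2 : ‖z - x‖ ^ 2 = ‖xk - x‖ ^ 2 - 2 * γ * ⟪xk - x, utld⟫ + γ ^ 2 * ‖utld‖ ^ 2 := by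
    have : z - x = (xk - x) - γ • utld := by rw [hz]; abel
    rw [this, norm_sub_sq_real, real_inner_smul_right, norm_smul]
    simp [abs_of_pos hγ, mul_pow]
    ring
  -- subgradient inequality
  have h3 : f xk - f x ≤ ⟪xk - x, u⟫ := by
    have := hu x
    have e : ⟪x - xk, u⟫ = -⟪xk - x, u⟫ := by
      rw [← inner_neg_left]; congr 1; abel
    rw [e] at this; linarith
  have h4 : ⟪x - xk, utld - u⟫ = -⟪xk - x, utld⟫ + ⟪xk - x, u⟫ := by
    simp only [inner_sub_left, inner_sub_right]; ring
  nlinarith [mul_le_mul_of_nonneg_left h3 (by linarith : (0:ℝ) ≤ 2 * γ)]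
end

section
/- Let (w_i), (γ_i), (λ_i) be strictly positive with w_i γ_i λ_i² ≤ b_k for all i ≤ k, and suppose (λ_k²/(α_k² b_k²))·Σ_{i=1}^k w_i²γ_i²λ_i² · (σ²/m + L²) ≤ (2/3)β², where λ_k = βα_k + L. Let (ζ_i) be a martingale difference sequence with |ζ_i| ≤ 2b_k a.s. and conditional variances σ_i² ≤ w_i²γ_i²λ_i²(σ²/m + L²). Then for δ ∈ (0, 2/e], P( Σ_{i=1}^k ζ_i > 2b_k·log(2/δ) ) ≤ δ/2. -/
open MeasureTheory

lemma exp_quad_bound {y : ℝ} (h1 : -(3/2) ≤ y) (h2 : y ≤ 3/2) :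
    Real.exp y ≤ 1 + y + (4/3) * y^2 := by
  rcases le_or_gt y 0 with hy | hy
  · have hQ : (1 - y/2)^2 ≤ Real.exp (-y) := by
      have h3 := Real.add_one_le_exp (-y/2)
      have h4 : Real.exp (-y/2) * Real.exp (-y/2) = Real.exp (-y) := by
        rw [← Real.exp_add]; ring_nf
      nlinarith [Real.exp_pos (-y/2)]
    have hd : (0:ℝ) < (1 - y/2)^2 := by nlinarith
    have h5 : Real.exp y ≤ 1/(1-y/2)^2 := by
      rw [le_div_iff₀ hd]
      calc Real.exp y * (1-y/2)^2 ≤ Real.exp y * Real.exp (-y) :=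
            mul_le_mul_of_nonneg_left hQ (Real.exp_pos y).le
        _ = 1 := by rw [← Real.exp_add]; simp
    refine h5.trans ?_
    rw [div_le_iff₀ hd]
    have hy3 : y^3 ≤ 0 := by nlinarith [sq_nonneg y]
    nlinarith [sq_nonneg y, sq_nonneg (y^2)]
  · rcases le_or_gt y 1 with hy1 | hy1
    · have := Real.exp_bound' hy.le hy1 (n := 3) (by norm_num)
      simp [Finset.sum_range_succ] at this
      have hcube : y^3 ≤ y^2 := by nlinarith
      norm_num [Nat.factorial] at this
      nlinarith
    · have hx0 : 0 ≤ y - 1 := by linarith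
      have hx1 : y - 1 ≤ 1 := by linarith
      have hB := Real.exp_bound' hx0 hx1 (n := 3) (by norm_num)
      simp [Finset.sum_range_succ] at hB
      have hsplit : Real.exp y = Real.exp 1 * Real.exp (y - 1) := by
        rw [← Real.exp_add]; ring_nf
      have he : Real.exp 1 < 2.7182818286 := Real.exp_one_lt_d9
      have he0 : 0 < Real.exp 1 := Real.exp_pos 1
      rw [hsplit]
      have hB' : Real.exp 1 * Real.exp (y-1) ≤ Real.exp 1 * (1 + (y-1) + (y-1)^2/2 + (2/9)*(y-1)^3) := by
        apply mul_le_mul_of_nonneg_left _ he0.le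
        norm_num [Nat.factorial] at hB ⊢
        nlinarith [hB]
      refine hB'.trans ?_
      set x := y - 1 with hxdef
      have hy' : y = 1 + x := by ring
      rw [hy']
      have hx2 : x ≤ 1/2 := by simp [hxdef]; linarith
      nlinarith [mul_nonneg hx0 hx0, mul_nonneg (mul_nonneg hx0 hx0) hx0,
        mul_nonneg (mul_nonneg hx0 hx0) (by linarith : (0:ℝ) ≤ 1/2 - x)]

set_option maxHeartbeats 1000000 in
theorem analysis_term_C
    {Ω : Type*} {m0 : MeasurableSpace Ω} {μ : Measure Ω} [IsProbabilityMeasure μ]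
    (ℱ : Filtration ℕ m0) (ζ : ℕ → Ω → ℝ)
    (β σ L m : ℝ) (hβ : 0 < β) (hσ : 0 < σ) (hL : 0 < L) (hm : 0 < m)
    (w γ α lam : ℕ → ℝ) (b : ℝ) (hb : 0 < b)
    (hw : ∀ i, 0 < w i) (hγ : ∀ i, 0 < γ i) (hα : ∀ i, 0 < α i)
    (hlam : ∀ i, lam i = β * α i + L)
    (k : ℕ) (hk : 1 ≤ k)
    (hbk : ∀ i ∈ Finset.Icc 1 k, w i * γ i * lam i ^ 2 ≤ b)
    (hvarsum : (lam k ^ 2 / (α k ^ 2 * b ^ 2)) *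
        (∑ i ∈ Finset.Icc 1 k, w i ^ 2 * γ i ^ 2 * lam i ^ 2) * (σ ^ 2 / m + L ^ 2)
      ≤ (2 / 3) * β ^ 2)
    (hadapted : ∀ i, StronglyMeasurable[ℱ i] (ζ i))
    (hint : ∀ i, Integrable (ζ i) μ)
    (hmdiff : ∀ i, μ[ζ (i + 1)|ℱ i] =ᵐ[μ] 0)
    (hbdd : ∀ i, ∀ᵐ ω ∂μ, |ζ i ω| ≤ 2 * b)
    (hcondvar : ∀ i, ∀ᵐ ω ∂μ,
      condExp (ℱ (i - 1)) μ (fun ω' => (ζ i ω') ^ 2) ω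
        ≤ w i ^ 2 * γ i ^ 2 * lam i ^ 2 * (σ ^ 2 / m + L ^ 2))
    (δ : ℝ) (hδ : 0 < δ) (hδ' : δ ≤ 2 / Real.exp 1) :
    (μ {ω | (∑ i ∈ Finset.Icc 1 k, ζ i ω) > 2 * b * Real.log (2 / δ)}).toReal ≤ δ / 2 := by
  have hb' : b ≠ 0 := ne_of_gt hb
  set c : ℝ := 2 * b with hcdef
  have hc : 0 < c := by positivity
  set t : ℝ := 3 / (4 * b) with htdef
  have ht : 0 < t := by positivity
  have htc : t * c = 3/2 := by rw [hcdef, htdef]; field_simp; ring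
  have hposσ : (0:ℝ) < σ ^ 2 / m + L ^ 2 := by
    have h1 : 0 < σ ^ 2 / m := div_pos (pow_pos hσ 2) hm
    nlinarith [pow_pos hL 2]
  have hlampos : ∀ i, 0 < lam i := fun i => by
    rw [hlam]; have := mul_pos hβ (hα i); linarith
  set v : ℕ → ℝ := fun i => w i ^ 2 * γ i ^ 2 * lam i ^ 2 * (σ ^ 2 / m + L ^ 2) with hvdef
  have hv : ∀ i, 0 < v i := fun i =>
    mul_pos (mul_pos (mul_pos (pow_pos (hw i) 2) (pow_pos (hγ i) 2))
      (pow_pos (hlampos i) 2)) hposσ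
  set cst : ℝ := (4/3) * t^2 with hcstdef
  have hcst : (0:ℝ) ≤ cst := by positivity
  -- measurability
  have hζm : ∀ i, Measurable (ζ i) := fun i => ((hadapted i).mono (ℱ.le i)).measurable
  have hSm : ∀ j, Measurable (fun ω => ∑ i ∈ Finset.Icc 1 j, ζ i ω) := fun j =>
    Finset.measurable_sum _ (fun i _ => hζm i)
  -- integrability helper
  have hbin : ∀ (f : Ω → ℝ) (C : ℝ), Measurable f → (∀ᵐ ω ∂μ, ‖f ω‖ ≤ C) → Integrable f μ :=
    fun f C hf hbd => (integrable_const C).mono' hf.aestronglyMeasurable hbd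
  have habdd : ∀ᵐ ω ∂μ, ∀ i, |ζ i ω| ≤ c := ae_all_iff.mpr hbdd
  have hSbdd : ∀ j, ∀ᵐ ω ∂μ, ∑ i ∈ Finset.Icc 1 j, ζ i ω ≤ j * c := by
    intro j
    filter_upwards [habdd] with ω hω
    calc ∑ i ∈ Finset.Icc 1 j, ζ i ω ≤ ∑ i ∈ Finset.Icc 1 j, c :=
          Finset.sum_le_sum (fun i _ => (abs_le.1 (hω i)).2)
      _ = j * c := by simp [Nat.card_Icc]
  have hexpint : ∀ j, Integrable (fun ω => Real.exp (t * ∑ i ∈ Finset.Icc 1 j, ζ i ω)) μ := by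
    intro j
    refine hbin _ (Real.exp (t * (j * c))) (Real.measurable_exp.comp (measurable_const.mul (hSm j))) ?_
    filter_upwards [hSbdd j] with ω hω
    rw [Real.norm_eq_abs, abs_of_pos (Real.exp_pos _)]
    exact Real.exp_le_exp.2 (mul_le_mul_of_nonneg_left hω ht.le)
  have hζint2 : ∀ i, Integrable (fun ω => (ζ i ω)^2) μ := by
    intro i
    refine hbin _ (c^2) ((hζm i).pow_const 2) ?_
    filter_upwards [hbdd i] with ω hω
    rw [Real.norm_eq_abs, abs_pow]
    exact pow_le_pow_left₀ (abs_nonneg _) hω 2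
  have hexpζint : ∀ i, Integrable (fun ω => Real.exp (t * ζ i ω)) μ := by
    intro i
    refine hbin _ (Real.exp (t * c)) (Real.measurable_exp.comp (measurable_const.mul (hζm i))) ?_
    filter_upwards [hbdd i] with ω hω
    rw [Real.norm_eq_abs, abs_of_pos (Real.exp_pos _)]
    exact Real.exp_le_exp.2 (mul_le_mul_of_nonneg_left (abs_le.1 hω).2 ht.le)
  -- key induction on the exponential moment
  have key : ∀ j, ∫ ω, Real.exp (t * ∑ i ∈ Finset.Icc 1 j, ζ i ω) ∂μ
      ≤ ∏ i ∈ Finset.Icc 1 j, (1 + cst * v i) := by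
    intro j
    induction j with
    | zero =>
      have he : Finset.Icc 1 0 = (∅ : Finset ℕ) := by simp
      simp [he]
    | succ n ih =>
      set f : Ω → ℝ := fun ω => Real.exp (t * ∑ i ∈ Finset.Icc 1 n, ζ i ω) with hfdef
      set g : Ω → ℝ := fun ω => Real.exp (t * ζ (n+1) ω) with hgdef
      set K : ℝ := 1 + cst * v (n+1) with hKdef
      have hKpos : 0 < K := by
        have h1 := mul_nonneg hcst (hv (n+1)).le
        rw [hKdef]; linarith
      have hfg : (fun ω => Real.exp (t * ∑ i ∈ Finset.Icc 1 (n+1), ζ i ω)) = f * g := by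
        funext ω
        rw [hfdef, hgdef]
        show Real.exp (t * ∑ i ∈ Finset.Icc 1 (n+1), ζ i ω)
          = Real.exp (t * ∑ i ∈ Finset.Icc 1 n, ζ i ω) * Real.exp (t * ζ (n+1) ω)
        rw [Finset.sum_Icc_succ_top (by omega : 1 ≤ n + 1), mul_add, Real.exp_add]
      have hfmeas : StronglyMeasurable[ℱ n] f := by
        have hSn : Measurable[ℱ n] (fun ω => ∑ i ∈ Finset.Icc 1 n, ζ i ω) :=
          Finset.measurable_sum _ (fun i hi =>
            ((hadapted i).mono (ℱ.mono (Finset.mem_Icc.1 hi).2)).measurable)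
        exact (Real.measurable_exp.comp (measurable_const.mul hSn)).stronglyMeasurable
      have hf_int : Integrable f μ := hexpint n
      have hg_int : Integrable g μ := hexpζint (n+1)
      have hfg_int : Integrable (f * g) μ := by rw [← hfg]; exact hexpint (n+1)
      -- conditional expectation of g is ≤ K a.e.
      have hcond_le : μ[g | ℱ n] ≤ᵐ[μ] fun _ => K := by
        set q : Ω → ℝ := fun ω => (ζ (n+1) ω)^2 with hqdef
        set R : Ω → ℝ := fun ω => Real.exp (t * ζ (n+1) ω) - 1 - t * ζ (n+1) ω with hRdef
        have hRint : Integrable R μ :=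
          ((hexpζint (n+1)).sub (integrable_const 1)).sub ((hint (n+1)).const_mul t)
        have hgeq : g = (fun _ => (1:ℝ)) + t • ζ (n+1) + R := by
          funext ω
          show Real.exp (t * ζ (n+1) ω) = 1 + t * ζ (n+1) ω
            + (Real.exp (t * ζ (n+1) ω) - 1 - t * ζ (n+1) ω)
          ring
        have hRle : R ≤ᵐ[μ] cst • q := by
          filter_upwards [hbdd (n+1)] with ω hω
          have habs : |t * ζ (n+1) ω| ≤ 3/2 := by
            rw [abs_mul, abs_of_pos ht, ← htc]
            exact mul_le_mul_of_nonneg_left hω ht.le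
          have hq := exp_quad_bound (abs_le.1 habs).1 (abs_le.1 habs).2
          show Real.exp (t * ζ (n+1) ω) - 1 - t * ζ (n+1) ω ≤ cst * (ζ (n+1) ω)^2
          rw [hcstdef]
          nlinarith [hq]
        have hq_int : Integrable q μ := hζint2 (n+1)
        have hcsq : Integrable (cst • q) μ := hq_int.smul cst
        have h1 : μ[R | ℱ n] ≤ᵐ[μ] μ[cst • q | ℱ n] := condExp_mono hRint hcsq hRle
        have h2 : μ[cst • q | ℱ n] =ᵐ[μ] cst • μ[q | ℱ n] := condExp_smul cst q (ℱ n)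
        have h3 : ∀ᵐ ω ∂μ, (μ[q | ℱ n]) ω ≤ v (n+1) := by
          have h := hcondvar (n+1)
          simp only [Nat.add_sub_cancel] at h
          exact h
        have hRcond : ∀ᵐ ω ∂μ, (μ[R | ℱ n]) ω ≤ cst * v (n+1) := by
          filter_upwards [h1, h2, h3] with ω e1 e2 e3
          have e2' : (μ[cst • q | ℱ n]) ω = cst * (μ[q | ℱ n]) ω := by
            rw [e2]; simp [smul_eq_mul]
          calc (μ[R | ℱ n]) ω ≤ cst * (μ[q | ℱ n]) ω := by rw [← e2']; exact e1
            _ ≤ cst * v (n+1) := mul_le_mul_of_nonneg_left e3 hcst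
        have hadd1 : μ[g | ℱ n]
            =ᵐ[μ] μ[(fun _ => (1:ℝ)) + t • ζ (n+1) | ℱ n] + μ[R | ℱ n] := by
          rw [hgeq]
          exact condExp_add ((integrable_const 1).add ((hint (n+1)).smul t)) hRint (ℱ n)
        have hadd2 : μ[(fun _ => (1:ℝ)) + t • ζ (n+1) | ℱ n]
            =ᵐ[μ] μ[(fun _ => (1:ℝ)) | ℱ n] + μ[t • ζ (n+1) | ℱ n] :=
          condExp_add (integrable_const 1) ((hint (n+1)).smul t) (ℱ n)
        have hconst : μ[(fun _ => (1:ℝ)) | ℱ n] = fun _ => (1:ℝ) := condExp_const (ℱ.le n) 1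
        have hzero : μ[t • ζ (n+1) | ℱ n] =ᵐ[μ] 0 := by
          refine (condExp_smul t (ζ (n+1)) (ℱ n)).trans ?_
          filter_upwards [hmdiff n] with ω hω
          show t • (μ[ζ (n+1) | ℱ n]) ω = (0 : Ω → ℝ) ω
          rw [hω]; simp
        filter_upwards [hadd1, hadd2, hzero, hRcond] with ω e1 e2 e3 e4
        have estep : (μ[g | ℱ n]) ω
            = (μ[(fun _ => (1:ℝ)) | ℱ n]) ω + (μ[t • ζ (n+1) | ℱ n]) ω + (μ[R | ℱ n]) ω := by
          rw [e1]; simp only [Pi.add_apply]; rw [e2]; simp [Pi.add_apply]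
        show (μ[g | ℱ n]) ω ≤ K
        rw [estep, hconst, e3, hKdef]
        simp only [Pi.zero_apply]
        linarith
      -- the tower step
      have e1 : ∫ ω, (f * g) ω ∂μ = ∫ ω, (μ[f * g | ℱ n]) ω ∂μ :=
        (integral_condExp (ℱ.le n)).symm
      have e2 : μ[f * g | ℱ n] =ᵐ[μ] f * μ[g | ℱ n] :=
        condExp_mul_of_stronglyMeasurable_left hfmeas hfg_int hg_int
      have e2' : μ[f * g | ℱ n] =ᵐ[μ] fun ω => f ω * (μ[g | ℱ n]) ω := e2
      have hint1 : Integrable (fun ω => f ω * (μ[g | ℱ n]) ω) μ := integrable_condExp.congr e2'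
      have hint2 : Integrable (fun ω => f ω * K) μ := hf_int.mul_const K
      have hfK : ∫ ω, f ω * (μ[g | ℱ n]) ω ∂μ ≤ ∫ ω, f ω * K ∂μ := by
        refine integral_mono_ae hint1 hint2 ?_
        filter_upwards [hcond_le] with ω hω
        exact mul_le_mul_of_nonneg_left hω (Real.exp_pos _).le
      calc ∫ ω, Real.exp (t * ∑ i ∈ Finset.Icc 1 (n+1), ζ i ω) ∂μ
          = ∫ ω, (f * g) ω ∂μ := by rw [hfg]
        _ = ∫ ω, (μ[f * g | ℱ n]) ω ∂μ := e1
        _ = ∫ ω, f ω * (μ[g | ℱ n]) ω ∂μ := integral_congr_ae e2'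
        _ ≤ ∫ ω, f ω * K ∂μ := hfK
        _ = (∫ ω, f ω ∂μ) * K := integral_mul_const K f
        _ ≤ (∏ i ∈ Finset.Icc 1 n, (1 + cst * v i)) * K :=
            mul_le_mul_of_nonneg_right ih hKpos.le
        _ = ∏ i ∈ Finset.Icc 1 (n+1), (1 + cst * v i) := by
            rw [Finset.prod_Icc_succ_top (by omega : 1 ≤ n + 1), hKdef]
  -- bound the sum of variances
  have hba : β * α k ≤ lam k := by rw [hlam]; linarith
  have hsumv : ∑ i ∈ Finset.Icc 1 k, v i ≤ (2/3) * b^2 := by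
    have h1 : ∑ i ∈ Finset.Icc 1 k, v i
        = (∑ i ∈ Finset.Icc 1 k, w i ^ 2 * γ i ^ 2 * lam i ^ 2) * (σ^2/m + L^2) := by
      rw [hvdef, Finset.sum_mul]
    set B := ∑ i ∈ Finset.Icc 1 k, w i ^ 2 * γ i ^ 2 * lam i ^ 2 with hBdef
    have hαb : (0:ℝ) < α k^2 * b^2 := by have := hα k; positivity
    have h2 : lam k^2 * (B * (σ^2/m + L^2)) ≤ 2/3 * β^2 * (α k^2 * b^2) := by
      rw [div_mul_eq_mul_div, div_mul_eq_mul_div, div_le_iff₀ hαb] at hvarsum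
      nlinarith [hvarsum]
    have h3 : β^2 * α k^2 ≤ lam k^2 := by nlinarith [mul_pos hβ (hα k)]
    have hBC : 0 ≤ B * (σ^2/m + L^2) := by
      apply mul_nonneg _ hposσ.le
      apply Finset.sum_nonneg
      intro i _
      have := hw i; have := hγ i; have := hlampos i
      positivity
    rw [h1]
    nlinarith [mul_pos (hlampos k) (hlampos k), mul_nonneg (sub_nonneg.2 h3) (sq_nonneg b),
      mul_nonneg hBC (sq_nonneg (lam k))]
  -- exponential moment bound
  have hmom : ∫ ω, Real.exp (t * ∑ i ∈ Finset.Icc 1 k, ζ i ω) ∂μ ≤ Real.exp (1/2) := by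
    refine (key k).trans ?_
    calc ∏ i ∈ Finset.Icc 1 k, (1 + cst * v i)
        ≤ ∏ i ∈ Finset.Icc 1 k, Real.exp (cst * v i) := by
          refine Finset.prod_le_prod (fun i _ => ?_) (fun i _ => ?_)
          · have := mul_nonneg hcst (hv i).le; linarith
          · have := Real.add_one_le_exp (cst * v i); linarith
      _ = Real.exp (∑ i ∈ Finset.Icc 1 k, cst * v i) := (Real.exp_sum _ _).symm
      _ ≤ Real.exp (1/2) := by
          apply Real.exp_le_exp.2
          rw [← Finset.mul_sum]
          have hstep : cst * (∑ i ∈ Finset.Icc 1 k, v i) ≤ cst * ((2/3) * b^2) :=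
            mul_le_mul_of_nonneg_left hsumv hcst
          refine hstep.trans ?_
          have heq : cst * ((2/3) * b^2) = (4/3) * (3/(4*b))^2 * ((2/3) * b^2) := by
            rw [hcstdef, htdef]
          rw [heq]
          have : (4:ℝ)/3 * (3/(4*b))^2 * ((2/3) * b^2) = 1/2 := by
            field_simp
            ring
          linarith
  -- log bound
  set ℓ : ℝ := Real.log (2/δ) with hℓdef
  have hℓ1 : 1 ≤ ℓ := by
    have h2δ : Real.exp 1 ≤ 2/δ := by
      rw [le_div_iff₀ hδ]
      calc Real.exp 1 * δ ≤ Real.exp 1 * (2 / Real.exp 1) :=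
            mul_le_mul_of_nonneg_left hδ' (Real.exp_pos 1).le
        _ = 2 := by field_simp
    calc (1:ℝ) = Real.log (Real.exp 1) := (Real.log_exp 1).symm
      _ ≤ ℓ := Real.log_le_log (Real.exp_pos 1) h2δ
  -- Markov / Chernoff
  have hmar := mul_meas_ge_le_integral_of_nonneg (μ := μ)
    (f := fun ω => Real.exp (t * ∑ i ∈ Finset.Icc 1 k, ζ i ω))
    (ae_of_all _ fun ω => (Real.exp_pos _).le) (hexpint k) (Real.exp (t * (c * ℓ)))
  have hsub : {ω | (∑ i ∈ Finset.Icc 1 k, ζ i ω) > c * ℓ}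
      ⊆ {ω | Real.exp (t * (c * ℓ)) ≤ Real.exp (t * ∑ i ∈ Finset.Icc 1 k, ζ i ω)} := by
    intro ω hω
    simp only [Set.mem_setOf_eq] at *
    exact Real.exp_le_exp.2 (mul_le_mul_of_nonneg_left (le_of_lt hω) ht.le)
  have hmono : (μ {ω | (∑ i ∈ Finset.Icc 1 k, ζ i ω) > c * ℓ}).toReal
      ≤ (μ {ω | Real.exp (t * (c * ℓ)) ≤ Real.exp (t * ∑ i ∈ Finset.Icc 1 k, ζ i ω)}).toReal :=
    ENNReal.toReal_mono (measure_ne_top μ _) (measure_mono hsub)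
  have htη : t * (c * ℓ) = (3/2) * ℓ := by rw [← mul_assoc, htc]
  have hfin : (μ {ω | Real.exp (t * (c * ℓ)) ≤ Real.exp (t * ∑ i ∈ Finset.Icc 1 k, ζ i ω)}).toReal
      ≤ δ / 2 := by
    have hexppos : 0 < Real.exp (t * (c * ℓ)) := Real.exp_pos _
    have h6 : (μ {ω | Real.exp (t * (c * ℓ)) ≤ Real.exp (t * ∑ i ∈ Finset.Icc 1 k, ζ i ω)}).toReal
        ≤ (∫ ω, Real.exp (t * ∑ i ∈ Finset.Icc 1 k, ζ i ω) ∂μ) / Real.exp (t * (c * ℓ)) := by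
      rw [le_div_iff₀ hexppos, mul_comm]
      exact hmar
    refine h6.trans ?_
    rw [div_le_iff₀ hexppos]
    have hδ2 : δ / 2 = Real.exp (-ℓ) := by
      rw [hℓdef, ← Real.log_inv, Real.exp_log (inv_pos.2 (div_pos two_pos hδ)), inv_div]
    calc ∫ ω, Real.exp (t * ∑ i ∈ Finset.Icc 1 k, ζ i ω) ∂μ ≤ Real.exp (1/2) := hmom
      _ ≤ δ / 2 * Real.exp (t * (c * ℓ)) := by
          rw [htη, hδ2, ← Real.exp_add]
          apply Real.exp_le_exp.2
          linarith
  exact hmono.trans hfin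
end
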